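/- For any connected graph G and any n ≥ 1, pd(G × P_n) ≤ pd(G) + 1, where P_n is the path on n vertices. -/

import Mathlib

open SimpleGraph

/-- Distance from a vertex to a set of vertices: `min {d(v,x) : x ∈ P}`. -/
noncomputable def distToSet {V : Type*} (G : SimpleGraph V) (v : V) (P : Set V) : ℕ :=
  sInf ((G.dist v) '' P)

/-- `S` is a resolving set of `G`. -/
def IsResolvingSet {V : Type*} (G : SimpleGraph V) (S : Set V) : Prop :=
  ∀ u v : V, u ≠ v → ∃ w ∈ S, G.dist u w ≠ G.dist v w

/-- The metric dimension of `G`. -/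
noncomputable def metricDim {V : Type*} (G : SimpleGraph V) : ℕ :=
  sInf {n | ∃ S : Finset V, S.card = n ∧ IsResolvingSet G ↑S}

/-- `Π` is a resolving partition of `G`: a partition of the vertex set such that
distinct vertices have distinct vectors of distances to the parts. -/
def IsResolvingPartition {V : Type*} (G : SimpleGraph V) (Pi : Set (Set V)) : Prop :=
  Setoid.IsPartition Pi ∧
    ∀ u v : V, u ≠ v → ∃ P ∈ Pi, distToSet G u P ≠ distToSet G v P

/-- The partition dimension of `G`. -/
noncomputable def partitionDim {V : Type*} (G : SimpleGraph V) : ℕ :=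
  sInf {n | ∃ Pi : Finset (Set V), Pi.card = n ∧ IsResolvingPartition G ↑Pi}

section BoxDist
variable {α β : Type*} {G : SimpleGraph α} {H : SimpleGraph β}

lemma dist_le_one_of_adj {u v : α} (h : G.Adj u v) : G.dist u v ≤ 1 :=
  le_of_eq (dist_eq_one_iff_adj.mpr h)

lemma boxProd_walk_lower (hG : G.Connected) (hH : H.Connected) :
    ∀ {x y : α × β} (w : (G □ H).Walk x y),
      G.dist x.1 y.1 + H.dist x.2 y.2 ≤ w.length := by
  intro x y w
  induction w with
  | nil => simp
  | @cons a b c h p ih =>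
    rw [SimpleGraph.Walk.length_cons]
    rcases h with ⟨hadj, heq⟩ | ⟨hadj, heq⟩
    · have h1 : G.dist a.1 c.1 ≤ G.dist a.1 b.1 + G.dist b.1 c.1 := hG.dist_triangle
      have h2 : G.dist a.1 b.1 ≤ 1 := dist_le_one_of_adj hadj
      have h3 : H.dist a.2 c.2 = H.dist b.2 c.2 := by rw [heq]
      omega
    · have h1 : H.dist a.2 c.2 ≤ H.dist a.2 b.2 + H.dist b.2 c.2 := hH.dist_triangle
      have h2 : H.dist a.2 b.2 ≤ 1 := dist_le_one_of_adj hadj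
      have h3 : G.dist a.1 c.1 = G.dist b.1 c.1 := by rw [heq]
      omega

lemma boxProd_dist (hG : G.Connected) (hH : H.Connected) (x y : α × β) :
    (G □ H).dist x y = G.dist x.1 y.1 + H.dist x.2 y.2 := by
  apply le_antisymm
  · obtain ⟨w₁, hw₁⟩ := hG.exists_walk_length_eq_dist x.1 y.1
    obtain ⟨w₂, hw₂⟩ := hH.exists_walk_length_eq_dist x.2 y.2
    have := SimpleGraph.dist_le ((w₁.boxProdLeft H x.2).append (w₂.boxProdRight G y.1))
    have hl : ((w₁.boxProdLeft H x.2).append (w₂.boxProdRight G y.1)).length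
        = w₁.length + w₂.length := by
      rw [SimpleGraph.Walk.length_append]
      exact congrArg₂ (· + ·) (SimpleGraph.Walk.length_map _ w₁) (SimpleGraph.Walk.length_map _ w₂)
    rw [hl, hw₁, hw₂] at this
    exact this
  · obtain ⟨w, hw⟩ := (hG.boxProd hH).exists_walk_length_eq_dist x y
    rw [← hw]
    exact boxProd_walk_lower hG hH w

end BoxDist

section PathDist

lemma pathGraph_adj_natDist {n : ℕ} {i j : Fin n} (h : (pathGraph n).Adj i j) :
    Nat.dist i.val j.val = 1 := by
  rw [pathGraph_adj] at h
  rcases h with h | h <;> simp [Nat.dist] <;> omega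

lemma pathGraph_walk_lower {n : ℕ} : ∀ {i j : Fin n} (w : (pathGraph n).Walk i j),
    Nat.dist i.val j.val ≤ w.length := by
  intro i j w
  induction w with
  | nil => simp [Nat.dist]
  | @cons a b c h p ih =>
    rw [SimpleGraph.Walk.length_cons]
    have h1 := Nat.dist.triangle_inequality a.val b.val c.val
    have h2 := pathGraph_adj_natDist h
    omega

lemma pathGraph_dist_le_aux {n : ℕ} :
    ∀ (k : ℕ) (i j : Fin n), i.val + k = j.val → (pathGraph n).dist i j ≤ k := by
  intro k
  induction k with
  | zero =>
    intro i j h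
    have : i = j := Fin.ext (by omega)
    subst this; simp
  | succ k ih =>
    intro i j h
    have hlt : i.val + 1 < n := by omega
    set i' : Fin n := ⟨i.val + 1, hlt⟩ with hi'
    have hadj : (pathGraph n).Adj i i' := by rw [pathGraph_adj]; left; rfl
    have hconn : (pathGraph n).Connected := by
      obtain ⟨m, rfl⟩ : ∃ m, n = m + 1 := ⟨n - 1, by omega⟩
      exact pathGraph_connected m
    calc (pathGraph n).dist i j ≤ (pathGraph n).dist i i' + (pathGraph n).dist i' j :=
          hconn.dist_triangle
      _ ≤ 1 + k := by
          have := dist_eq_one_iff_adj.mpr hadj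
          have := ih i' j (by simp [hi']; omega)
          omega
      _ = k + 1 := by omega

lemma pathGraph_dist {n : ℕ} (i j : Fin n) :
    (pathGraph n).dist i j = Nat.dist i.val j.val := by
  have hconn : (pathGraph n).Connected := by
    obtain ⟨m, rfl⟩ : ∃ m, n = m + 1 := ⟨n - 1, by have := i.pos; omega⟩
    exact pathGraph_connected m
  apply le_antisymm
  · rcases le_total i.val j.val with h | h
    · rw [Nat.dist_eq_sub_of_le h]
      exact pathGraph_dist_le_aux _ i j (by omega)
    · rw [Nat.dist_comm, Nat.dist_eq_sub_of_le h, SimpleGraph.dist_comm]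
      exact pathGraph_dist_le_aux _ j i (by omega)
  · obtain ⟨w, hw⟩ := hconn.exists_walk_length_eq_dist i j
    rw [← hw]
    exact pathGraph_walk_lower w

end PathDist

section DistToSet

lemma distToSet_le {V : Type*} (G : SimpleGraph V) {v x : V} {P : Set V} (hx : x ∈ P) :
    distToSet G v P ≤ G.dist v x :=
  Nat.sInf_le (Set.mem_image_of_mem _ hx)

lemma le_distToSet {V : Type*} (G : SimpleGraph V) {v : V} {P : Set V} (hP : P.Nonempty)
    {c : ℕ} (h : ∀ x ∈ P, c ≤ G.dist v x) : c ≤ distToSet G v P := by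
  apply le_csInf (hP.image _)
  rintro _ ⟨x, hx, rfl⟩
  exact h x hx

lemma exists_distToSet {V : Type*} (G : SimpleGraph V) (v : V) {P : Set V} (hP : P.Nonempty) :
    ∃ x ∈ P, distToSet G v P = G.dist v x := by
  obtain ⟨x, hx, hd⟩ := Nat.sInf_mem (hP.image (G.dist v))
  exact ⟨x, hx, hd.symm⟩

lemma distToSet_singleton {V : Type*} (G : SimpleGraph V) (v x : V) :
    distToSet G v {x} = G.dist v x := by
  simp [distToSet]

lemma distToSet_univ_self {V : Type*} (G : SimpleGraph V) (v : V) :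
    distToSet G v Set.univ = 0 := by
  have h := distToSet_le G (Set.mem_univ v) (v := v)
  rw [SimpleGraph.dist_self] at h
  omega

lemma distToSet_prod {V W : Type*} {G : SimpleGraph V} {H : SimpleGraph W}
    (hG : G.Connected) (hH : H.Connected) (u : V) (i : W) {P : Set V} {T : Set W}
    (hP : P.Nonempty) (c : ℕ) (hub : ∃ t ∈ T, H.dist i t = c)
    (hlb : ∀ t ∈ T, c ≤ H.dist i t) :
    distToSet (G □ H) (u, i) (P ×ˢ T) = distToSet G u P + c := by
  obtain ⟨t₀, ht₀, hc⟩ := hub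
  apply le_antisymm
  · obtain ⟨w₀, hw₀, hd⟩ := exists_distToSet G u hP
    calc distToSet (G □ H) (u, i) (P ×ˢ T) ≤ (G □ H).dist (u, i) (w₀, t₀) :=
          distToSet_le _ (Set.mk_mem_prod hw₀ ht₀)
      _ = distToSet G u P + c := by rw [boxProd_dist hG hH, hd, hc]
  · apply le_distToSet _ (hP.prod ⟨t₀, ht₀⟩)
    rintro ⟨w, t⟩ ⟨hw, ht⟩
    rw [boxProd_dist hG hH]
    exact add_le_add (distToSet_le _ hw) (hlb t ht)

end DistToSet

/-- The singleton partition is resolving, so the defining set of `partitionDim` is nonempty. -/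
lemma partitionDim_set_nonempty {V : Type*} [Fintype V] (G : SimpleGraph V)
    (hG : G.Connected) :
    {m | ∃ Pi : Finset (Set V), Pi.card = m ∧ IsResolvingPartition G ↑Pi}.Nonempty := by
  classical
  refine ⟨(Finset.univ.image (fun v : V => ({v} : Set V))).card,
    Finset.univ.image (fun v : V => ({v} : Set V)), rfl, ?_, ?_⟩
  · constructor
    · simp only [Finset.coe_image, Finset.coe_univ, Set.image_univ, Set.mem_range]
      rintro ⟨v, hv⟩
      exact (Set.singleton_nonempty v).ne_empty hv
    · intro a
      refine ⟨{a}, ⟨by simp, rfl⟩, ?_⟩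
      rintro y ⟨hy, hay⟩
      simp only [Finset.coe_image, Finset.coe_univ, Set.image_univ, Set.mem_range] at hy
      obtain ⟨v, rfl⟩ := hy
      rw [Set.mem_singleton_iff] at hay
      rw [hay]
  · intro u v huv
    refine ⟨{u}, by simp, ?_⟩
    rw [distToSet_singleton, distToSet_singleton, SimpleGraph.dist_self]
    exact fun h => (hG.pos_dist_of_ne (Ne.symm huv)).ne' (by rw [SimpleGraph.dist_comm] at h ⊢; omega)

lemma prod_right_inj {V W : Type*} {T : Set W} (hT : T.Nonempty) :
    Function.Injective (fun P : Set V => P ×ˢ T) := by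
  obtain ⟨t, ht⟩ := hT
  intro P Q h
  have h' : P ×ˢ T = Q ×ˢ T := h
  ext a
  constructor <;> intro ha
  · have : (a, t) ∈ P ×ˢ T := ⟨ha, ht⟩
    rw [h'] at this
    exact this.1
  · have : (a, t) ∈ Q ×ˢ T := ⟨ha, ht⟩
    rw [← h'] at this
    exact this.1

theorem stmt_9 {V : Type*} [Fintype V] (G : SimpleGraph V) (hG : G.Connected)
    (n : ℕ) (hn : 1 ≤ n) :
    partitionDim (G.boxProd (SimpleGraph.pathGraph n)) ≤ partitionDim G + 1 := by
  classical
  have hV : Nonempty V := hG.nonempty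
  obtain ⟨x₀⟩ := id hV
  have hH : (pathGraph n).Connected := by
    obtain ⟨m, rfl⟩ : ∃ m, n = m + 1 := ⟨n - 1, by omega⟩
    exact pathGraph_connected m
  -- optimal resolving partition of G
  obtain ⟨Pi0, hcard, hpart, hres⟩ :=
    Nat.sInf_mem (partitionDim_set_nonempty G hG)
  have hdim : Pi0.card = partitionDim G := hcard
  have hPne : ∀ P ∈ Pi0, (P : Set V).Nonempty := by
    intro P hP
    rw [Set.nonempty_iff_ne_empty]
    rintro rfl
    exact hpart.1 (by simpa using hP)
  set z : Fin n := ⟨0, by omega⟩ with hz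
  rcases Nat.lt_or_ge n 2 with h2 | h2
  · -- n = 1 case
    have hn1 : n = 1 := by omega
    -- parts P ×ˢ {z}
    set Pi' : Finset (Set (V × Fin n)) := Pi0.image (fun P => P ×ˢ ({z} : Set (Fin n)))
      with hPi'
    have hsub : ∀ i : Fin n, i = z := by
      intro i
      apply Fin.ext
      have h1 := i.isLt
      have h2 : z.val = 0 := rfl
      omega
    have hzdist : ∀ i t : Fin n, (pathGraph n).dist i t = 0 := by
      intro i t
      rw [hsub i, hsub t, SimpleGraph.dist_self]
    have hcompute : ∀ (u : V) (i : Fin n) (P : Set V), P.Nonempty →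
        distToSet (G □ pathGraph n) (u, i) (P ×ˢ ({z} : Set (Fin n))) = distToSet G u P := by
      intro u i P hP
      have h := distToSet_prod (T := ({z} : Set (Fin n))) hG hH u i hP 0
        ⟨z, Set.mem_singleton z, hzdist i z⟩ (fun t _ => Nat.zero_le _)
      rw [add_zero] at h
      exact h
    have hmem : Pi'.card ∈
        {m | ∃ Pi : Finset (Set (V × Fin n)), Pi.card = m ∧
          IsResolvingPartition (G □ pathGraph n) ↑Pi} := by
      refine ⟨Pi', rfl, ⟨?_, ?_⟩, ?_⟩
      · -- no empty part
        simp only [hPi', Finset.coe_image, Set.mem_image, Finset.mem_coe]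
        rintro ⟨P, hP, hPe⟩
        obtain ⟨a, ha⟩ := hPne P hP
        rw [Set.eq_empty_iff_forall_notMem] at hPe
        exact hPe (a, z) ⟨ha, Set.mem_singleton z⟩
      · -- exists unique part
        rintro ⟨u, i⟩
        obtain ⟨P, ⟨hPmem, huP⟩, huniq⟩ := hpart.2 u
        refine ⟨P ×ˢ ({z} : Set (Fin n)), ⟨?_, huP, hsub i⟩, ?_⟩
        · simp only [hPi', Finset.coe_image, Set.mem_image, Finset.mem_coe]
          exact ⟨P, hPmem, rfl⟩
        · rintro y ⟨hy, hxy⟩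
          simp only [hPi', Finset.coe_image, Set.mem_image, Finset.mem_coe] at hy
          obtain ⟨Q, hQ, rfl⟩ := hy
          rw [huniq Q ⟨hQ, hxy.1⟩]
      · -- resolving
        rintro ⟨u, i⟩ ⟨v, j⟩ hne
        have hij : i = j := (hsub i).trans (hsub j).symm
        have huv : u ≠ v := by
          rintro rfl
          exact hne (by rw [hij])
        obtain ⟨P, hPmem, hPd⟩ := hres u v huv
        refine ⟨P ×ˢ ({z} : Set (Fin n)), ?_, ?_⟩
        · simp only [hPi', Finset.coe_image, Set.mem_image, Finset.mem_coe]
          exact ⟨P, hPmem, rfl⟩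
        · rw [hcompute u i P (hPne P hPmem), hcompute v j P (hPne P hPmem)]
          exact hPd
    calc partitionDim (G □ pathGraph n) ≤ Pi'.card := Nat.sInf_le hmem
      _ ≤ Pi0.card := Finset.card_image_le
      _ ≤ partitionDim G + 1 := by omega
  · -- n ≥ 2 case
    set o : Fin n := ⟨1, by omega⟩ with ho
    set T : Set (Fin n) := {t : Fin n | t.val ≠ 0} with hT
    have hoT : o ∈ T := by simp [hT, ho]
    set Q0 : Set (V × Fin n) := (Set.univ : Set V) ×ˢ ({z} : Set (Fin n)) with hQ0
    set Pi' : Finset (Set (V × Fin n)) := insert Q0 (Pi0.image (fun P => P ×ˢ T)) with hPi'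
    -- distance computations
    have hz0 : z.val = 0 := rfl
    have ho1 : o.val = 1 := rfl
    have hdzero : ∀ (u : V) (i : Fin n),
        distToSet (G □ pathGraph n) (u, i) Q0 = i.val := by
      intro u i
      have h := distToSet_prod (T := ({z} : Set (Fin n))) hG hH u i
        (⟨x₀, trivial⟩ : (Set.univ : Set V).Nonempty) i.val
        ⟨z, Set.mem_singleton z, by rw [pathGraph_dist]; simp only [Nat.dist, hz0]; omega⟩
        (by
          intro t ht
          rw [Set.eq_of_mem_singleton ht, pathGraph_dist]
          simp only [Nat.dist, hz0]
          omega)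
      rw [hQ0, h, distToSet_univ_self, zero_add]
    have hdpart : ∀ (u : V) (i : Fin n) (P : Set V), P.Nonempty →
        distToSet (G □ pathGraph n) (u, i) (P ×ˢ T) =
          distToSet G u P + (if i.val = 0 then 1 else 0) := by
      intro u i P hP
      by_cases hi : i.val = 0
      · rw [if_pos hi]
        refine distToSet_prod (T := T) hG hH u i hP 1
          ⟨o, hoT, by rw [pathGraph_dist]; simp only [Nat.dist, ho1]; omega⟩ ?_
        intro t ht
        have ht' : t.val ≠ 0 := ht
        rw [pathGraph_dist]
        simp only [Nat.dist]
        omega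
      · rw [if_neg hi]
        exact distToSet_prod (T := T) hG hH u i hP 0
          ⟨i, hi, by rw [SimpleGraph.dist_self]⟩ (fun t _ => Nat.zero_le _)
    have hmemQ0 : ∀ (x : V × Fin n), x ∈ Q0 ↔ x.2 = z := by
      intro x
      exact ⟨fun h => h.2, fun h => ⟨trivial, h⟩⟩
    have hmemPT : ∀ (x : V × Fin n) (P : Set V), x ∈ P ×ˢ T ↔ x.1 ∈ P ∧ x.2.val ≠ 0 := by
      intro x P; simp [hT, Set.mem_prod]
    have hQ0ne : Q0 ∉ Pi0.image (fun P => P ×ˢ T) := by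
      simp only [Finset.mem_image]
      rintro ⟨P, hP, hPQ⟩
      have : (x₀, z) ∈ Q0 := (hmemQ0 _).mpr rfl
      rw [← hPQ] at this
      exact ((hmemPT _ _).mp this).2 rfl
    have hmem : Pi'.card ∈
        {m | ∃ Pi : Finset (Set (V × Fin n)), Pi.card = m ∧
          IsResolvingPartition (G □ pathGraph n) ↑Pi} := by
      refine ⟨Pi', rfl, ⟨?_, ?_⟩, ?_⟩
      · -- no empty part
        simp only [hPi', Finset.coe_insert, Set.mem_insert_iff, Finset.coe_image,
          Set.mem_image, Finset.mem_coe]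
        rintro (h | ⟨P, hP, hPe⟩)
        · have : (x₀, z) ∈ Q0 := (hmemQ0 _).mpr rfl
          rw [← h] at this
          exact this
        · obtain ⟨a, ha⟩ := hPne P hP
          have : (a, o) ∈ P ×ˢ T := ⟨ha, hoT⟩
          rw [hPe] at this
          exact this
      · -- exists unique part
        rintro ⟨u, i⟩
        by_cases hi : i.val = 0
        · refine ⟨Q0, ⟨?_, (hmemQ0 _).mpr (Fin.ext hi)⟩, ?_⟩
          · simp [hPi']
          · rintro y ⟨hy, hxy⟩
            simp only [hPi', Finset.coe_insert, Set.mem_insert_iff, Finset.coe_image,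
              Set.mem_image, Finset.mem_coe] at hy
            rcases hy with rfl | ⟨Q, hQ, rfl⟩
            · rfl
            · exact absurd ((hmemPT _ _).mp hxy).2 (by simpa using hi)
        · obtain ⟨P, ⟨hPmem, huP⟩, huniq⟩ := hpart.2 u
          refine ⟨P ×ˢ T, ⟨?_, (hmemPT _ _).mpr ⟨huP, hi⟩⟩, ?_⟩
          · simp only [hPi', Finset.coe_insert, Set.mem_insert_iff, Finset.coe_image,
              Set.mem_image, Finset.mem_coe]
            exact Or.inr ⟨P, hPmem, rfl⟩
          · rintro y ⟨hy, hxy⟩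
            simp only [hPi', Finset.coe_insert, Set.mem_insert_iff, Finset.coe_image,
              Set.mem_image, Finset.mem_coe] at hy
            rcases hy with rfl | ⟨Q, hQ, rfl⟩
            · exact absurd (Fin.val_eq_of_eq ((hmemQ0 _).mp hxy)) hi
            · rw [huniq Q ⟨hQ, ((hmemPT _ _).mp hxy).1⟩]
      · -- resolving
        rintro ⟨u, i⟩ ⟨v, j⟩ hne
        by_cases hij : i = j
        · subst hij
          have huv : u ≠ v := fun h => hne (by rw [h])
          obtain ⟨P, hPmem, hPd⟩ := hres u v huv
          refine ⟨P ×ˢ T, ?_, ?_⟩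
          · simp only [hPi', Finset.coe_insert, Set.mem_insert_iff, Finset.coe_image,
              Set.mem_image, Finset.mem_coe]
            exact Or.inr ⟨P, hPmem, rfl⟩
          · rw [hdpart u i P (hPne P hPmem), hdpart v i P (hPne P hPmem)]
            intro h
            exact hPd (by omega)
        · refine ⟨Q0, by simp [hPi'], ?_⟩
          rw [hdzero, hdzero]
          intro h
          exact hij (Fin.ext h)
    have hcard' : Pi'.card = Pi0.card + 1 := by
      rw [hPi', Finset.card_insert_of_notMem hQ0ne,
        Finset.card_image_of_injective _ (prod_right_inj ⟨o, hoT⟩)]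
    calc partitionDim (G □ pathGraph n) ≤ Pi'.card := Nat.sInf_le hmem
      _ = partitionDim G + 1 := by rw [hcard', hdim]
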